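/- Let X ⊆ ℝⁿ and Y ⊆ ℝᵐ be nonempty convex compact sets, κ_X = max_{x∈X} ‖x‖₂ > 0, κ_Y = max_{y∈Y} ‖y‖₂ > 0, κ = max{κ_X, κ_Y}, C_X = cone({κ_X} × X) ⊆ ℝ^{1+n}, C_Y = cone({κ_Y} × Y) ⊆ ℝ^{1+m}. Let F : ℝⁿ × ℝᵐ → ℝ be continuous on X × Y, convex in x on X for each y ∈ Y and concave in y on Y for each x ∈ X. Suppose the two players generate (x_t) ⊆ X and (y_t) ⊆ Y as follows: for each t there exist f_t ∈ ℝⁿ and g_t ∈ ℝᵐ with ‖f_t‖₂ ≤ L, ‖g_t‖₂ ≤ L, F(x, y_t) ≥ F(x_t, y_t) + ⟨f_t, x − x_t⟩ for all x ∈ X and F(x_t, y) ≤ F(x_t, y_t) + ⟨g_t, y − y_t⟩ for all y ∈ Y; the x-player runs CBA⁺ with uniform weights on the losses f_t over the cone C_X (payoffs v_t = (⟨f_t, x_t⟩/κ_X, −f_t), u_1 = π_{C_X}(v_1), x_{t+1} = (κ_X/ũ_t)·û_t if u_t ≠ 0 and x_{t+1} ∈ X arbitrary if u_t = 0, u_{t+1}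 = π_{C_X}((t·u_t + v_{t+1})/(t+1))), and the y-player runs the same CBA⁺ recursion on the losses −g_t over the cone C_Y. Let x̄_T = (2/(T(T+1))) Σ_{t=1}^T t·x_t and ȳ_T = (2/(T(T+1))) Σ_{t=1}^T t·y_t. Then sup_{y∈Y} F(x̄_T, y) − inf_{x∈X} F(x, ȳ_T) ≤ 8κL/√T. -/

import Mathlib

open scoped RealInnerProductSpace
open Finset

noncomputable section

/-- `ℝ^{1+d}`, with its first coordinate a scalar block, as a Euclidean (L2) space. -/
abbrev Rone (d : ℕ) := WithLp 2 (ℝ × EuclideanSpace ℝ (Fin d))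

/-- The conic hull `cone({κ} × Z) = {α • (κ, z) : α ≥ 0, z ∈ Z} ⊆ ℝ^{1+d}`. -/
def coneOf (d : ℕ) (κ : ℝ) (Z : Set (EuclideanSpace ℝ (Fin d))) : Set (Rone d) :=
  {w | ∃ a : ℝ, 0 ≤ a ∧ ∃ z ∈ Z, w = a • (WithLp.toLp 2 (κ, z) : Rone d)}

/-- `p` is a nearest point to `u` in `C` (the metric projection of `u` onto `C`). -/
def IsProjOn {H : Type*} [NormedAddCommGroup H] (C : Set H) (u p : H) : Prop :=
  p ∈ C ∧ ∀ w ∈ C, ‖u - p‖ ≤ ‖u - w‖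

section Helpers
variable {d : ℕ} {κ : ℝ} {Z : Set (EuclideanSpace ℝ (Fin d))}

lemma inner_Rone (w w' : Rone d) : ⟪w, w'⟫ = w.ofLp.1 * w'.ofLp.1 + ⟪w.ofLp.2, w'.ofLp.2⟫ := by
  rw [WithLp.prod_inner_apply]; simp [RCLike.inner_apply, mul_comm]

lemma Rone.ext {w w' : Rone d} (h1 : w.ofLp.1 = w'.ofLp.1) (h2 : w.ofLp.2 = w'.ofLp.2) : w = w' :=
  WithLp.ofLp_injective 2 (Prod.ext h1 h2)

lemma coneOf.zero_mem (hne : Z.Nonempty) : (0 : Rone d) ∈ coneOf d κ Z := by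
  obtain ⟨z, hz⟩ := hne
  exact ⟨0, le_rfl, z, hz, by simp⟩

lemma coneOf.smul_mem {c : ℝ} (hc : 0 ≤ c) {w : Rone d} (hw : w ∈ coneOf d κ Z) :
    c • w ∈ coneOf d κ Z := by
  obtain ⟨a, ha, z, hz, rfl⟩ := hw
  exact ⟨c * a, mul_nonneg hc ha, z, hz, by rw [smul_smul]⟩

lemma coneOf.add_mem (hZ : Convex ℝ Z) (hne : Z.Nonempty) {w w' : Rone d}
    (hw : w ∈ coneOf d κ Z) (hw' : w' ∈ coneOf d κ Z) : w + w' ∈ coneOf d κ Z := by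
  obtain ⟨a, ha, z, hz, rfl⟩ := hw
  obtain ⟨b, hb, z', hz', rfl⟩ := hw'
  rcases eq_or_lt_of_le (add_nonneg ha hb) with h0 | hpos
  · have ha0 : a = 0 := by linarith
    have hb0 : b = 0 := by linarith
    subst ha0; subst hb0
    exact ⟨0, le_rfl, z, hz, by simp⟩
  · refine ⟨a + b, hpos.le, (a/(a+b)) • z + (b/(a+b)) • z',
      hZ hz hz' (by positivity) (by positivity) (by field_simp), ?_⟩
    apply Rone.ext
    · show a * κ + b * κ = (a+b) * κ
      ring
    · show a • z + b • z' = (a+b) • ((a/(a+b)) • z + (b/(a+b)) • z')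
      rw [smul_add, smul_smul, smul_smul]
      have h : a + b ≠ 0 := hpos.ne'
      congr 1 <;> congr 1 <;> field_simp
lemma coneOf.convex (hZ : Convex ℝ Z) (hne : Z.Nonempty) : Convex ℝ (coneOf d κ Z) := by
  intro w hw w' hw' s t hs ht _
  exact coneOf.add_mem hZ hne (coneOf.smul_mem hs hw) (coneOf.smul_mem ht hw')

lemma coneOf.inner_nonneg (hbound : ∀ z ∈ Z, ‖z‖ ≤ κ) {w w' : Rone d}
    (hw : w ∈ coneOf d κ Z) (hw' : w' ∈ coneOf d κ Z) : 0 ≤ ⟪w, w'⟫ := by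
  obtain ⟨a, ha, z, hz, rfl⟩ := hw
  obtain ⟨b, hb, z', hz', rfl⟩ := hw'
  rw [real_inner_smul_left, real_inner_smul_right, inner_Rone]
  have h1 : |⟪z, z'⟫| ≤ ‖z‖ * ‖z'‖ := abs_real_inner_le_norm z z'
  have h2 := hbound z hz
  have h3 := hbound z' hz'
  have h4 : (0:ℝ) ≤ ‖z‖ := norm_nonneg _
  have h5 : (0:ℝ) ≤ ‖z'‖ := norm_nonneg _
  have h6 := abs_le.1 h1
  show 0 ≤ a * (b * (κ * κ + ⟪z, z'⟫))
  have : 0 ≤ κ * κ + ⟪z, z'⟫ := by nlinarith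
  positivity

lemma coneOf.fst_pos (hκpos : 0 < κ) {w : Rone d} (hw : w ∈ coneOf d κ Z) (h0 : w ≠ 0) :
    0 < w.ofLp.1 := by
  obtain ⟨a, ha, z, hz, rfl⟩ := hw
  have : a ≠ 0 := by rintro rfl; simp at h0
  show 0 < a * κ
  exact mul_pos (lt_of_le_of_ne ha (Ne.symm this)) hκpos

lemma isProjOn_inner_le {u p : Rone d} (hZ : Convex ℝ Z) (hne : Z.Nonempty)
    (h : IsProjOn (coneOf d κ Z) u p) : ∀ w ∈ coneOf d κ Z, ⟪u - p, w - p⟫ ≤ 0 := by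
  haveI : Nonempty ↑(coneOf d κ Z) := ⟨⟨p, h.1⟩⟩
  have hbdd : BddBelow (Set.range fun w : coneOf d κ Z => ‖u - w‖) := by
    refine ⟨0, ?_⟩
    rintro x ⟨w, rfl⟩
    exact norm_nonneg _
  have heq : ‖u - p‖ = ⨅ w : coneOf d κ Z, ‖u - w‖ := by
    refine le_antisymm (le_ciInf fun w => h.2 w w.2) ?_
    exact ciInf_le hbdd ⟨p, h.1⟩
  exact (norm_eq_iInf_iff_real_inner_le_zero (coneOf.convex hZ hne) h.1).1 heq

lemma isProjOn_orth {u p : Rone d} (hZ : Convex ℝ Z) (hne : Z.Nonempty)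
    (h : IsProjOn (coneOf d κ Z) u p) : ⟪u - p, p⟫ = 0 := by
  have h1 := isProjOn_inner_le hZ hne h ((2:ℝ) • p) (coneOf.smul_mem (by norm_num) h.1)
  have h2 := isProjOn_inner_le hZ hne h 0 (coneOf.zero_mem hne)
  have e1 : (2:ℝ) • p - p = p := by module
  rw [e1] at h1
  rw [zero_sub, inner_neg_right] at h2
  linarith

lemma isProjOn_resid {u p : Rone d} (hZ : Convex ℝ Z) (hne : Z.Nonempty)
    (h : IsProjOn (coneOf d κ Z) u p) : ∀ w ∈ coneOf d κ Z, ⟪u - p, w⟫ ≤ 0 := by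
  intro w hw
  have h1 := isProjOn_inner_le hZ hne h (p + w) (coneOf.add_mem hZ hne h.1 hw)
  rwa [add_sub_cancel_left] at h1

lemma isProjOn_inner_self_le {u p : Rone d} (hZ : Convex ℝ Z) (hne : Z.Nonempty)
    (h : IsProjOn (coneOf d κ Z) u p) : ⟪p, p⟫ ≤ ⟪u, u⟫ := by
  have h1 := isProjOn_orth hZ hne h
  have h2 : (0:ℝ) ≤ ⟪u - p, u - p⟫ := real_inner_self_nonneg
  rw [inner_sub_left, inner_sub_right, inner_sub_right] at h2
  rw [inner_sub_left] at h1
  have h3 : ⟪p, u⟫ = ⟪u, p⟫ := real_inner_comm u p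
  linarith

lemma isProjOn_smul {c : ℝ} (hc : 0 < c) {u p : Rone d}
    (h : IsProjOn (coneOf d κ Z) u p) : IsProjOn (coneOf d κ Z) (c • u) (c • p) := by
  refine ⟨coneOf.smul_mem hc.le h.1, fun w hw => ?_⟩
  have h1 := h.2 (c⁻¹ • w) (coneOf.smul_mem (inv_nonneg.2 hc.le) hw)
  have e1 : ‖c • u - c • p‖ = c * ‖u - p‖ := by
    rw [← smul_sub, norm_smul, Real.norm_eq_abs, abs_of_pos hc]
  have e3 : c • u - w = c • (u - c⁻¹ • w) := by
    rw [smul_sub, smul_smul, mul_inv_cancel₀ hc.ne', one_smul]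
  rw [e1, e3, norm_smul, Real.norm_eq_abs, abs_of_pos hc]
  exact mul_le_mul_of_nonneg_left h1 hc.le

end Helpers

lemma player_regret {d : ℕ} (T : ℕ) (hT : 1 ≤ T) {Z : Set (EuclideanSpace ℝ (Fin d))}
    (hne : Z.Nonempty) (hconv : Convex ℝ Z) {κ L : ℝ} (hκpos : 0 < κ)
    (hbound : ∀ z ∈ Z, ‖z‖ ≤ κ) (hL0 : 0 ≤ L)
    (z : ℕ → EuclideanSpace ℝ (Fin d)) (hzmem : ∀ t < T, z t ∈ Z)
    (ℓ : ℕ → EuclideanSpace ℝ (Fin d)) (hℓ : ∀ t < T, ‖ℓ t‖ ≤ L)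
    (v u : ℕ → Rone d)
    (hv : ∀ t < T, v t = (WithLp.toLp 2 (⟪ℓ t, z t⟫ / κ, -ℓ t) : Rone d))
    (hu0 : IsProjOn (coneOf d κ Z) (v 0) (u 0))
    (hurec : ∀ t : ℕ, t + 1 < T →
      IsProjOn (coneOf d κ Z)
        ((((t : ℝ) + 2)⁻¹) • (((t : ℝ) + 1) • u t + v (t + 1))) (u (t + 1)))
    (hplay : ∀ t : ℕ, t + 1 < T → u t ≠ 0 → z (t + 1) = (κ / (u t).ofLp.1) • (u t).ofLp.2)
    {z' : EuclideanSpace ℝ (Fin d)} (hz' : z' ∈ Z) :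
    ∑ t ∈ range T, (((t : ℝ) + 1) * ⟪ℓ t, z t - z'⟫) ≤ 2 * κ * L * T * Real.sqrt T := by
  set C := coneOf d κ Z with hC
  set W : ℕ → Rone d := fun t => ((t : ℝ) + 1) • u t with hW
  have hW0 : IsProjOn C (v 0) (W 0) := by
    have : W 0 = u 0 := by simp [hW]
    rwa [this]
  have hWrec : ∀ t : ℕ, t + 1 < T → IsProjOn C (W t + v (t + 1)) (W (t + 1)) := by
    intro t ht
    have hc : (0:ℝ) < (t : ℝ) + 2 := by positivity
    have h1 := isProjOn_smul hc (hurec t ht)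
    have e1 : ((t : ℝ) + 2) • ((((t : ℝ) + 2)⁻¹) • (((t : ℝ) + 1) • u t + v (t + 1)))
        = W t + v (t + 1) := by
      rw [smul_smul, mul_inv_cancel₀ hc.ne', one_smul]
    have e2 : ((t : ℝ) + 2) • u (t + 1) = W (t + 1) := by
      simp only [hW]
      congr 1
      push_cast
      ring
    rwa [e1, e2] at h1
  have humem : ∀ t < T, u t ∈ C := by
    intro t ht
    cases t with
    | zero => exact hu0.1
    | succ s => exact (hurec s ht).1
  have hWmem : ∀ t < T, W t ∈ C := by
    intro t ht
    exact coneOf.smul_mem (by positivity) (humem t ht)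
  have hBlack : ∀ t : ℕ, t + 1 < T → ⟪W t, v (t + 1)⟫ = 0 := by
    intro t ht
    by_cases h0 : u t = 0
    · have : W t = 0 := by simp [hW, h0]
      simp [this]
    · have hfst : 0 < (u t).ofLp.1 := coneOf.fst_pos hκpos (humem t (by omega)) h0
      have hzeq := hplay t ht h0
      rw [hW]
      simp only
      rw [real_inner_smul_left, hv (t+1) ht, inner_Rone]
      have e3 : ((WithLp.toLp 2 (⟪ℓ (t+1), z (t+1)⟫ / κ, -ℓ (t+1)) : Rone d)).ofLp.1 = ⟪ℓ (t+1), z (t+1)⟫ / κ := rfl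
      have e4 : ((WithLp.toLp 2 (⟪ℓ (t+1), z (t+1)⟫ / κ, -ℓ (t+1)) : Rone d)).ofLp.2 = -ℓ (t+1) := rfl
      rw [e3, e4, hzeq, real_inner_smul_right, inner_neg_right, real_inner_comm]
      field_simp
      ring
  have hvnorm : ∀ t < T, ⟪v t, v t⟫ ≤ 2 * L ^ 2 := by
    intro t ht
    rw [hv t ht, inner_Rone]
    have e3 : ((WithLp.toLp 2 (⟪ℓ t, z t⟫ / κ, -ℓ t) : Rone d)).ofLp.1 = ⟪ℓ t, z t⟫ / κ := rfl
    have e4 : ((WithLp.toLp 2 (⟪ℓ t, z t⟫ / κ, -ℓ t) : Rone d)).ofLp.2 = -ℓ t := rfl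
    rw [e3, e4, inner_neg_neg, real_inner_self_eq_norm_sq]
    have h1 : |⟪ℓ t, z t⟫| ≤ ‖ℓ t‖ * ‖z t‖ := abs_real_inner_le_norm _ _
    have h2 : ‖ℓ t‖ * ‖z t‖ ≤ L * κ :=
      mul_le_mul (hℓ t ht) (hbound _ (hzmem t ht)) (norm_nonneg _) hL0
    have h3 := abs_le.1 (h1.trans h2)
    have h4 : ⟪ℓ t, z t⟫ / κ * (⟪ℓ t, z t⟫ / κ) ≤ L ^ 2 := by
      rw [div_mul_div_comm, div_le_iff₀ (by positivity)]
      nlinarith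
    have h5 : ‖ℓ t‖ ^ 2 ≤ L ^ 2 := by nlinarith [norm_nonneg (ℓ t), hℓ t ht]
    linarith
  have hWnorm : ∀ t < T, ⟪W t, W t⟫ ≤ 2 * L ^ 2 * ((t : ℝ) + 1) := by
    intro t
    induction t with
    | zero =>
      intro ht
      have h1 := isProjOn_inner_self_le hconv hne hW0
      have h2 := hvnorm 0 ht
      push_cast
      linarith
    | succ s ih =>
      intro ht
      have hsT : s < T := by omega
      have h1 := isProjOn_inner_self_le hconv hne (hWrec s ht)
      have h2 : ⟪W s + v (s+1), W s + v (s+1)⟫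
          = ⟪W s, W s⟫ + 2 * ⟪W s, v (s+1)⟫ + ⟪v (s+1), v (s+1)⟫ :=
        real_inner_add_add_self _ _
      have h3 := hBlack s ht
      have h4 := hvnorm (s+1) ht
      have h5 := ih hsT
      push_cast
      push_cast at h5
      linarith [h1, h2.le]
  -- comparator
  set θ : Rone d := (WithLp.toLp 2 (κ, z') : Rone d) with hθ
  have hθmem : θ ∈ C := ⟨1, zero_le_one, z', hz', (one_smul ℝ _).symm⟩
  have hθnorm : ⟪θ, θ⟫ ≤ 2 * κ ^ 2 := by
    rw [hθ, inner_Rone]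
    have : ⟪z', z'⟫ = ‖z'‖ ^ 2 := real_inner_self_eq_norm_sq z'
    show κ * κ + ⟪z', z'⟫ ≤ 2 * κ ^ 2
    nlinarith [hbound z' hz', norm_nonneg z']
  have hvθ : ∀ t < T, ⟪v t, θ⟫ = ⟪ℓ t, z t - z'⟫ := by
    intro t ht
    rw [hv t ht, hθ, inner_Rone]
    show ⟪ℓ t, z t⟫ / κ * κ + ⟪-ℓ t, z'⟫ = ⟪ℓ t, z t - z'⟫
    rw [div_mul_cancel₀ _ hκpos.ne', inner_neg_left, inner_sub_right]
    ring
  have hWθpos : ∀ t < T, 0 ≤ ⟪W t, θ⟫ := fun t ht =>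
    coneOf.inner_nonneg hbound (hWmem t ht) hθmem
  have hstep0 : ⟪v 0, θ⟫ ≤ ⟪W 0, θ⟫ := by
    have h1 := isProjOn_resid hconv hne hW0 θ hθmem
    rw [inner_sub_left] at h1
    linarith
  have hstep : ∀ t : ℕ, t + 1 < T → ⟪v (t+1), θ⟫ ≤ ⟪W (t+1), θ⟫ - ⟪W t, θ⟫ := by
    intro t ht
    have h1 := isProjOn_resid hconv hne (hWrec t ht) θ hθmem
    rw [inner_sub_left, inner_add_left] at h1
    linarith
  have key : ∀ k, k < T → ∑ t ∈ range (k+1), (((t : ℝ) + 1) * ⟪v t, θ⟫)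
      ≤ ((k : ℝ) + 1) * ⟪W k, θ⟫ := by
    intro k
    induction k with
    | zero =>
      intro hk
      simpa using hstep0
    | succ s ih =>
      intro hk
      have hsT : s < T := by omega
      rw [Finset.sum_range_succ]
      have h1 : ((s:ℝ) + 1 + 1) * ⟪v (s+1), θ⟫
          ≤ ((s:ℝ) + 1 + 1) * (⟪W (s+1), θ⟫ - ⟪W s, θ⟫) :=
        mul_le_mul_of_nonneg_left (hstep s hk) (by positivity)
      have h2 := ih hsT
      have h3 := hWθpos s hsT
      push_cast
      push_cast at h2 h1
      nlinarith
  -- conclude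
  have hTpos : (0:ℝ) < T := by positivity
  have hfin := key (T-1) (by omega)
  have hTm : T - 1 + 1 = T := by omega
  rw [hTm] at hfin
  have hcast : ((T - 1 : ℕ) : ℝ) + 1 = (T : ℝ) := by
    have : ((T - 1 : ℕ) : ℝ) = (T : ℝ) - 1 := by
      push_cast [Nat.cast_sub hT]
      ring
    rw [this]; ring
  rw [hcast] at hfin
  have hsum_eq : ∑ t ∈ range T, (((t : ℝ) + 1) * ⟪ℓ t, z t - z'⟫)
      = ∑ t ∈ range T, (((t : ℝ) + 1) * ⟪v t, θ⟫) := by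
    refine Finset.sum_congr rfl fun t ht => ?_
    rw [hvθ t (Finset.mem_range.1 ht)]
  have hcs : ⟪W (T-1), θ⟫ ≤ ‖W (T-1)‖ * ‖θ‖ := real_inner_le_norm _ _
  have hWn : ‖W (T-1)‖ ^ 2 ≤ 2 * L ^ 2 * (T : ℝ) := by
    have := hWnorm (T-1) (by omega)
    rw [real_inner_self_eq_norm_sq] at this
    rwa [hcast] at this
  have hθn : ‖θ‖ ^ 2 ≤ 2 * κ ^ 2 := by
    rw [← real_inner_self_eq_norm_sq]; exact hθnorm
  have hprod : ‖W (T-1)‖ * ‖θ‖ ≤ 2 * κ * L * Real.sqrt T := by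
    have hb : (0:ℝ) ≤ 2 * κ * L * Real.sqrt T := by positivity
    have ha : (0:ℝ) ≤ ‖W (T-1)‖ * ‖θ‖ := by positivity
    have h2 : (‖W (T-1)‖ * ‖θ‖) ^ 2 ≤ (2 * κ * L * Real.sqrt T) ^ 2 := by
      have hr : (2 * κ * L * Real.sqrt T) ^ 2 = (2 * L ^ 2 * (T:ℝ)) * (2 * κ ^ 2) := by
        rw [mul_pow, Real.sq_sqrt (by positivity : (0:ℝ) ≤ (T:ℝ))]
        ring
      have hl : (‖W (T-1)‖ * ‖θ‖) ^ 2 = ‖W (T-1)‖ ^ 2 * ‖θ‖ ^ 2 := by ring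
      rw [hr, hl]
      exact mul_le_mul hWn hθn (sq_nonneg _) (by positivity)
    calc ‖W (T-1)‖ * ‖θ‖ = Real.sqrt ((‖W (T-1)‖ * ‖θ‖) ^ 2) := (Real.sqrt_sq ha).symm
      _ ≤ Real.sqrt ((2 * κ * L * Real.sqrt T) ^ 2) := Real.sqrt_le_sqrt h2
      _ = 2 * κ * L * Real.sqrt T := Real.sqrt_sq hb
  calc ∑ t ∈ range T, (((t : ℝ) + 1) * ⟪ℓ t, z t - z'⟫)
      = ∑ t ∈ range T, (((t : ℝ) + 1) * ⟪v t, θ⟫) := hsum_eq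
    _ ≤ (T : ℝ) * ⟪W (T-1), θ⟫ := hfin
    _ ≤ (T : ℝ) * (2 * κ * L * Real.sqrt T) := by
        exact mul_le_mul_of_nonneg_left (hcs.trans hprod) hTpos.le
    _ = 2 * κ * L * T * Real.sqrt T := by ring

lemma sum_range_weights (N : ℕ) : ∑ t ∈ range N, ((t:ℝ)+1) = (N:ℝ)*((N:ℝ)+1)/2 := by
  induction N with
  | zero => simp
  | succ n ih => rw [Finset.sum_range_succ, ih]; push_cast; ring

/-- Theorem 3 of the paper: when both players of the repeated game for the
saddle-point problem use CBA⁺ with uniform weights (the `x`-player on the losses `f_t`, the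
`y`-player on the losses `−g_t`), the duality gap of the linearly averaged iterates is at
most `8κL/√T`.  Sequences are indexed from `0`, so index `t ∈ {0, …, T−1}` is round `t+1`. -/
theorem cbaPlus_repeated_game_duality_gap (n m T : ℕ) (hT : 1 ≤ T)
    (X : Set (EuclideanSpace ℝ (Fin n))) (Y : Set (EuclideanSpace ℝ (Fin m)))
    (hXne : X.Nonempty) (hXconv : Convex ℝ X) (hXcomp : IsCompact X)
    (hYne : Y.Nonempty) (hYconv : Convex ℝ Y) (hYcomp : IsCompact Y)
    (κX κY κ L : ℝ)
    (hκX : IsGreatest ((fun z => ‖z‖) '' X) κX) (hκXpos : 0 < κX)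
    (hκY : IsGreatest ((fun z => ‖z‖) '' Y) κY) (hκYpos : 0 < κY)
    (hκ : κ = max κX κY)
    (F : EuclideanSpace ℝ (Fin n) → EuclideanSpace ℝ (Fin m) → ℝ)
    (hFcont : ContinuousOn (fun p => F p.1 p.2) (X ×ˢ Y))
    (hFconv : ∀ y' ∈ Y, ConvexOn ℝ X (fun x' => F x' y'))
    (hFconc : ∀ x' ∈ X, ConcaveOn ℝ Y (fun y' => F x' y'))
    (x : ℕ → EuclideanSpace ℝ (Fin n)) (y : ℕ → EuclideanSpace ℝ (Fin m))
    (hxmem : ∀ t < T, x t ∈ X) (hymem : ∀ t < T, y t ∈ Y)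
    (f : ℕ → EuclideanSpace ℝ (Fin n)) (g : ℕ → EuclideanSpace ℝ (Fin m))
    (hfL : ∀ t < T, ‖f t‖ ≤ L) (hgL : ∀ t < T, ‖g t‖ ≤ L)
    -- `f t` is a subgradient of `F (·, y t)` at `x t`
    (hf : ∀ t < T, ∀ x' ∈ X, F (x t) (y t) + ⟪f t, x' - x t⟫ ≤ F x' (y t))
    -- `g t` is a supergradient of `F (x t, ·)` at `y t`
    (hg : ∀ t < T, ∀ y' ∈ Y, F (x t) y' ≤ F (x t) (y t) + ⟪g t, y' - y t⟫)
    -- the x-player runs CBA⁺ with uniform weights on the losses `f t` over `cone({κX} × X)`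
    (vx : ℕ → Rone n) (ux : ℕ → Rone n)
    (hvx : ∀ t < T, vx t = (WithLp.toLp 2 (⟪f t, x t⟫ / κX, -f t) : Rone n))
    (hux0 : IsProjOn (coneOf n κX X) (vx 0) (ux 0))
    (huxrec : ∀ t : ℕ, t + 1 < T →
      IsProjOn (coneOf n κX X)
        ((((t : ℝ) + 2)⁻¹) • (((t : ℝ) + 1) • ux t + vx (t + 1))) (ux (t + 1)))
    (hxplay : ∀ t : ℕ, t + 1 < T → ux t ≠ 0 →
      x (t + 1) = (κX / (ux t).ofLp.1) • (ux t).ofLp.2)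
    -- the y-player runs the same CBA⁺ recursion on the losses `−g t` over `cone({κY} × Y)`
    (vy : ℕ → Rone m) (uy : ℕ → Rone m)
    (hvy : ∀ t < T, vy t = (WithLp.toLp 2 (⟪-g t, y t⟫ / κY, g t) : Rone m))
    (huy0 : IsProjOn (coneOf m κY Y) (vy 0) (uy 0))
    (huyrec : ∀ t : ℕ, t + 1 < T →
      IsProjOn (coneOf m κY Y)
        ((((t : ℝ) + 2)⁻¹) • (((t : ℝ) + 1) • uy t + vy (t + 1))) (uy (t + 1)))
    (hyplay : ∀ t : ℕ, t + 1 < T → uy t ≠ 0 →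
      y (t + 1) = (κY / (uy t).ofLp.1) • (uy t).ofLp.2)
    -- linearly averaged iterates
    (xbar : EuclideanSpace ℝ (Fin n)) (ybar : EuclideanSpace ℝ (Fin m))
    (hxbar : xbar = (2 / ((T : ℝ) * ((T : ℝ) + 1))) •
      ∑ t ∈ Finset.range T, ((t : ℝ) + 1) • x t)
    (hybar : ybar = (2 / ((T : ℝ) * ((T : ℝ) + 1))) •
      ∑ t ∈ Finset.range T, ((t : ℝ) + 1) • y t) :
    sSup ((fun y' => F xbar y') '' Y) - sInf ((fun x' => F x' ybar) '' X)
      ≤ 8 * κ * L / Real.sqrt T := by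
  have hTpos : (0:ℝ) < T := by exact_mod_cast hT
  have hκXκ : κX ≤ κ := hκ ▸ le_max_left _ _
  have hκYκ : κY ≤ κ := hκ ▸ le_max_right _ _
  have hκpos : 0 < κ := lt_of_lt_of_le hκXpos hκXκ
  have hbX : ∀ z ∈ X, ‖z‖ ≤ κX := fun z hz => hκX.2 ⟨z, hz, rfl⟩
  have hbY : ∀ z ∈ Y, ‖z‖ ≤ κY := fun z hz => hκY.2 ⟨z, hz, rfl⟩
  have hL0 : 0 ≤ L := le_trans (norm_nonneg (f 0)) (hfL 0 hT)
  have RX : ∀ x' ∈ X, ∑ t ∈ range T, (((t:ℝ)+1) * ⟪f t, x t - x'⟫)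
      ≤ 2*κX*L*T*Real.sqrt T := fun x' hx' =>
    player_regret T hT hXne hXconv hκXpos hbX hL0 x hxmem f hfL vx ux hvx hux0 huxrec
      hxplay hx'
  have RY : ∀ y' ∈ Y, ∑ t ∈ range T, (((t:ℝ)+1) * ⟪-g t, y t - y'⟫)
      ≤ 2*κY*L*T*Real.sqrt T := fun y' hy' =>
    player_regret T hT hYne hYconv hκYpos hbY hL0 y hymem (fun t => -g t)
      (fun t ht => by rw [norm_neg]; exact hgL t ht) vy uy
      (fun t ht => by rw [hvy t ht]; simp) huy0 huyrec hyplay hy'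
  set w : ℕ → ℝ := fun t => 2*((t:ℝ)+1)/((T:ℝ)*((T:ℝ)+1)) with hwdef
  have hw0 : ∀ t ∈ range T, 0 ≤ w t := fun t _ => by rw [hwdef]; positivity
  have hw1 : ∑ t ∈ range T, w t = 1 := by
    have h1 : ∑ t ∈ range T, w t
        = (∑ t ∈ range T, ((t:ℝ)+1)) * (2/((T:ℝ)*((T:ℝ)+1))) := by
      rw [Finset.sum_mul]
      exact Finset.sum_congr rfl fun t _ => by rw [hwdef]; ring
    rw [h1, sum_range_weights T]
    field_simp
  have hmemX : ∀ t ∈ range T, x t ∈ X := fun t ht => hxmem t (Finset.mem_range.1 ht)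
  have hmemY : ∀ t ∈ range T, y t ∈ Y := fun t ht => hymem t (Finset.mem_range.1 ht)
  have hxbar' : xbar = ∑ t ∈ range T, w t • x t := by
    rw [hxbar, Finset.smul_sum]
    exact Finset.sum_congr rfl fun t _ => by rw [smul_smul, hwdef]; congr 1; ring
  have hybar' : ybar = ∑ t ∈ range T, w t • y t := by
    rw [hybar, Finset.smul_sum]
    exact Finset.sum_congr rfl fun t _ => by rw [smul_smul, hwdef]; congr 1; ring
  set B := ∑ t ∈ range T, w t * F (x t) (y t) with hB
  set c := (2/((T:ℝ)*((T:ℝ)+1))) * (2*κ*L*(T:ℝ)*Real.sqrt T) with hc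
  have hfac : 0 ≤ 2/((T:ℝ)*((T:ℝ)+1)) := by positivity
  have hupper : ∀ y' ∈ Y, F xbar y' ≤ B + c := by
    intro y' hy'
    have hJ : F xbar y' ≤ ∑ t ∈ range T, w t * F (x t) y' := by
      rw [hxbar']
      have := (hFconv y' hy').map_sum_le hw0 hw1 hmemX
      simpa [smul_eq_mul] using this
    have hlin : ∑ t ∈ range T, w t * F (x t) y'
        ≤ B + ∑ t ∈ range T, w t * ⟪g t, y' - y t⟫ := by
      rw [hB, ← Finset.sum_add_distrib]
      refine Finset.sum_le_sum fun t ht => ?_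
      have h2 := hg t (Finset.mem_range.1 ht) y' hy'
      have h3 := hw0 t ht
      calc w t * F (x t) y' ≤ w t * (F (x t) (y t) + ⟪g t, y' - y t⟫) :=
            mul_le_mul_of_nonneg_left h2 h3
        _ = w t * F (x t) (y t) + w t * ⟪g t, y' - y t⟫ := by ring
    have hreg : ∑ t ∈ range T, w t * ⟪g t, y' - y t⟫ ≤ c := by
      have e : ∀ t : ℕ, ⟪g t, y' - y t⟫ = ⟪-g t, y t - y'⟫ := by
        intro t
        rw [inner_neg_left, inner_sub_right, inner_sub_right]
        ring
      have h2 : ∑ t ∈ range T, w t * ⟪g t, y' - y t⟫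
          = (2/((T:ℝ)*((T:ℝ)+1))) * ∑ t ∈ range T, (((t:ℝ)+1) * ⟪-g t, y t - y'⟫) := by
        rw [Finset.mul_sum]
        exact Finset.sum_congr rfl fun t _ => by rw [e t, hwdef]; ring
      rw [h2, hc]
      refine le_trans (mul_le_mul_of_nonneg_left (RY y' hy') hfac) ?_
      have : 2*κY*L*(T:ℝ)*Real.sqrt T ≤ 2*κ*L*(T:ℝ)*Real.sqrt T := by
        gcongr
      exact mul_le_mul_of_nonneg_left this hfac
    linarith
  have hlower : ∀ x' ∈ X, B - c ≤ F x' ybar := by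
    intro x' hx'
    have hJ : ∑ t ∈ range T, w t * F x' (y t) ≤ F x' ybar := by
      rw [hybar']
      have := (hFconc x' hx').le_map_sum hw0 hw1 hmemY
      simpa [smul_eq_mul] using this
    have hlin : B + ∑ t ∈ range T, w t * ⟪f t, x' - x t⟫
        ≤ ∑ t ∈ range T, w t * F x' (y t) := by
      rw [hB, ← Finset.sum_add_distrib]
      refine Finset.sum_le_sum fun t ht => ?_
      have h2 := hf t (Finset.mem_range.1 ht) x' hx'
      have h3 := hw0 t ht
      calc w t * F (x t) (y t) + w t * ⟪f t, x' - x t⟫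
          = w t * (F (x t) (y t) + ⟪f t, x' - x t⟫) := by ring
        _ ≤ w t * F x' (y t) := mul_le_mul_of_nonneg_left h2 h3
    have hreg : -c ≤ ∑ t ∈ range T, w t * ⟪f t, x' - x t⟫ := by
      have h2 : ∑ t ∈ range T, w t * ⟪f t, x' - x t⟫
          = -((2/((T:ℝ)*((T:ℝ)+1))) * ∑ t ∈ range T, (((t:ℝ)+1) * ⟪f t, x t - x'⟫)) := by
        rw [Finset.mul_sum, ← Finset.sum_neg_distrib]
        refine Finset.sum_congr rfl fun t _ => ?_
        have e : ⟪f t, x' - x t⟫ = -⟪f t, x t - x'⟫ := by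
          rw [inner_sub_right, inner_sub_right]; ring
        rw [e, hwdef]; ring
      rw [h2, hc, neg_le_neg_iff]
      refine le_trans (mul_le_mul_of_nonneg_left (RX x' hx') hfac) ?_
      have : 2*κX*L*(T:ℝ)*Real.sqrt T ≤ 2*κ*L*(T:ℝ)*Real.sqrt T := by gcongr
      exact mul_le_mul_of_nonneg_left this hfac
    linarith
  have hSup : sSup ((fun y' => F xbar y') '' Y) ≤ B + c := by
    refine csSup_le (hYne.image _) ?_
    rintro a ⟨y', hy', rfl⟩
    exact hupper y' hy'
  have hInf : B - c ≤ sInf ((fun x' => F x' ybar) '' X) := by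
    refine le_csInf (hXne.image _) ?_
    rintro a ⟨x', hx', rfl⟩
    exact hlower x' hx'
  have hfinal : 2 * c ≤ 8 * κ * L / Real.sqrt T := by
    have hs : Real.sqrt T * Real.sqrt T = (T:ℝ) := Real.mul_self_sqrt hTpos.le
    have hsp : 0 < Real.sqrt T := Real.sqrt_pos.2 hTpos
    have h2 : 2*c = 8*κ*L*(T:ℝ)*Real.sqrt T/((T:ℝ)*((T:ℝ)+1)) := by rw [hc]; ring
    rw [h2, div_le_div_iff₀ (by positivity) hsp]
    have hκL : 0 ≤ κ*L := mul_nonneg hκpos.le hL0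
    have h3 : 8*κ*L*(T:ℝ)*(Real.sqrt T*Real.sqrt T) = 8*κ*L*(T:ℝ)*(T:ℝ) := by rw [hs]
    nlinarith [h3, mul_nonneg hκL hTpos.le]
  linarith
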